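/- Kasai's inequality: for 1 < i ≤ N, if rank(i) > 1, then LCP[rank(i)] ≥ LCP[rank(i-1)] - 1, where LCP[p] is the length of the longest common prefix of suf(SA[p]) and suf(SA[p-1]). -/

import Mathlib

variable {α : Type*}

/-- The suffix of `T` starting at (1-based) position `i`. -/
def Suf (T : List α) (i : ℕ) : List α := T.drop (i - 1)

/-- The (1-based) `i`-th character of `T`, i.e. the first character of `Suf T i`. -/
def Chr [Inhabited α] (T : List α) (i : ℕ) : α := (Suf T i).headI

/-- `Suf T i` is lexicographically smaller than `Suf T j`. -/
def SufLt [LT α] (T : List α) (i j : ℕ) : Prop := List.Lex (· < ·) (Suf T i) (Suf T j)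

/-- `Suf T i` is an S-suffix (position in range, and `i = N` or `suf i < suf (i+1)`). -/
def IsS [LinearOrder α] (T : List α) (i : ℕ) : Prop :=
  1 ≤ i ∧ i ≤ T.length ∧ (i = T.length ∨ SufLt T i (i + 1))

/-- `Suf T i` is an L-suffix (position in range and not an S-suffix). -/
def IsL [LinearOrder α] (T : List α) (i : ℕ) : Prop :=
  1 ≤ i ∧ i ≤ T.length ∧ ¬ (i = T.length ∨ SufLt T i (i + 1))

/-- `Suf T i` is an LMS-suffix: an S-suffix whose preceding suffix is an L-suffix. -/
def IsLMS [LinearOrder α] (T : List α) (i : ℕ) : Prop :=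
  1 < i ∧ IsS T i ∧ IsL T (i - 1)

/-- The last character of `T` is strictly smaller than every other character of `T`. -/
def LastSmallest [Inhabited α] [LinearOrder α] (T : List α) : Prop :=
  ∀ i, 1 ≤ i → i < T.length → Chr T T.length < Chr T i


/-- `sa` is the suffix array of `T`: a permutation of `[1, ..., N]` listing suffix
start positions in increasing lexicographic order of the corresponding suffixes. -/
def IsSA [LinearOrder α] (T : List α) (sa : List ℕ) : Prop :=
  sa.Perm (List.range' 1 T.length) ∧ sa.Pairwise (SufLt T)

/-- The length of the longest common prefix of two lists. -/
def lcp [DecidableEq α] : List α → List α → ℕ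
  | a :: as, b :: bs => if a = b then lcp as bs + 1 else 0
  | _, _ => 0

/-- The LCP array entry at (0-based) position `p` of the suffix array:
`LCP[0] = 0` and `LCP[p] = lcp (suf sa[p]) (suf sa[p-1])` for `p ≥ 1`. -/
def LCPat [Inhabited α] [LinearOrder α] (T : List α) (sa : List ℕ) (p : ℕ) : ℕ :=
  if p = 0 then 0 else lcp (Suf T (sa.getD p 0)) (Suf T (sa.getD (p - 1) 0))

lemma lcp_nil_left [DecidableEq α] : ∀ c : List α, lcp [] c = 0
  | [] => rfl
  | _ :: _ => rfl

lemma lcp_nil_right [DecidableEq α] : ∀ c : List α, lcp c [] = 0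
  | [] => rfl
  | _ :: _ => rfl

lemma lex_cons_cases {r : α → α → Prop} {x y : α} {as bs : List α}
    (h : List.Lex r (x :: as) (y :: bs)) : r x y ∨ (x = y ∧ List.Lex r as bs) := by
  cases h with
  | rel h => exact Or.inl h
  | cons h => exact Or.inr ⟨rfl, h⟩

lemma lcp_le_of_lex [LinearOrder α] :
    ∀ (a b c : List α), List.Lex (· < ·) a b → List.Lex (· < ·) b c →
      lcp a c ≤ lcp b c
  | [], _, c, _, _ => by rw [lcp_nil_left]; exact Nat.zero_le _
  | _ :: _, _, [], _, _ => by rw [lcp_nil_right]; exact Nat.zero_le _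
  | x :: as, [], z :: cs, hab, _ => absurd hab List.not_lex_nil
  | x :: as, y :: bs, z :: cs, hab, hbc => by
    by_cases hxz : x = z
    · subst hxz
      rcases lex_cons_cases hab with h1 | ⟨rfl, h1⟩
      · rcases lex_cons_cases hbc with h2 | ⟨rfl, h2⟩
        · exact absurd (h1.trans h2) (lt_irrefl _)
        · exact absurd h1 (lt_irrefl _)
      · rcases lex_cons_cases hbc with h2 | ⟨-, h2⟩
        · exact absurd h2 (lt_irrefl _)
        · simp only [lcp, if_pos rfl]
          exact Nat.succ_le_succ (lcp_le_of_lex as bs cs h1 h2)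
    · simp [lcp, hxz]

lemma lcp_comm [DecidableEq α] : ∀ a b : List α, lcp a b = lcp b a
  | [], b => by rw [lcp_nil_left, lcp_nil_right]
  | a :: as, [] => by rw [lcp_nil_left, lcp_nil_right]
  | a :: as, b :: bs => by
    by_cases h : a = b
    · subst h; simp only [lcp, if_pos rfl, lcp_comm as bs]
    · simp only [lcp, if_neg h, if_neg (Ne.symm h)]

lemma suf_cons (T : List α) {m : ℕ} (hm1 : 1 ≤ m) (hm2 : m ≤ T.length) :
    Suf T m = T[m - 1]'(by omega) :: Suf T (m + 1) := by
  have h : m - 1 < T.length := by omega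
  show T.drop (m - 1) = _ :: T.drop (m + 1 - 1)
  rw [List.drop_eq_getElem_cons h, Nat.add_sub_cancel, Nat.sub_add_cancel hm1]

/-- Kasai's inequality: for `1 < i ≤ N`, if `rank i > 1` then
`LCP[rank i] ≥ LCP[rank (i-1)] - 1`. -/
theorem stmt17 [Inhabited α] [LinearOrder α] (T : List α) (hlast : LastSmallest T)
    (sa : List ℕ) (hsa : IsSA T sa)
    (i : ℕ) (h1 : 1 < i) (hiN : i ≤ T.length) (hrank : 1 ≤ sa.idxOf i) :
    LCPat T sa (sa.idxOf (i - 1)) ≤ LCPat T sa (sa.idxOf i) + 1 := by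
  obtain ⟨hperm, hpair⟩ := hsa
  have hlen : sa.length = T.length := by rw [hperm.length_eq, List.length_range']
  have hnodup : sa.Nodup := hperm.nodup_iff.mpr (List.nodup_range')
  have hmem : ∀ m : ℕ, m ∈ sa ↔ 1 ≤ m ∧ m ≤ T.length := by
    intro m
    rw [hperm.mem_iff, List.mem_range'_1]
    omega
  have hsorted : ∀ p q (hp : p < sa.length) (hq : q < sa.length), p < q →
      SufLt T sa[p] sa[q] := fun p q hp hq hpq =>
    List.pairwise_iff_getElem.mp hpair p q hp hq hpq
  have hi_mem : i ∈ sa := (hmem i).mpr ⟨by omega, hiN⟩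
  have hi1_mem : (i - 1) ∈ sa := (hmem _).mpr ⟨by omega, by omega⟩
  obtain ⟨r, hr⟩ : ∃ n, List.idxOf (i - 1) sa = n := ⟨_, rfl⟩
  obtain ⟨s, hs⟩ : ∃ n, List.idxOf i sa = n := ⟨_, rfl⟩
  rw [show List.idxOf (i - 1) sa = r from hr, show List.idxOf i sa = s from hs]
  rw [hs] at hrank
  have hslt : s < sa.length := hs ▸ List.idxOf_lt_length_iff.mpr hi_mem
  have hrlt : r < sa.length := hr ▸ List.idxOf_lt_length_iff.mpr hi1_mem
  have hsa_s : sa[s]'hslt = i := by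
    have := List.getElem_idxOf (List.idxOf_lt_length_iff.mpr hi_mem)
    simpa only [hs] using this
  have hsa_r : sa[r]'hrlt = i - 1 := by
    have := List.getElem_idxOf (List.idxOf_lt_length_iff.mpr hi1_mem)
    simpa only [hr] using this
  rcases Nat.eq_zero_or_pos r with hr0 | hr1
  · rw [hr0]; simp [LCPat]
  have hrn0 : r ≠ 0 := by omega
  have hsn0 : s ≠ 0 := by omega
  have hgetD : ∀ p (hp : p < sa.length), sa.getD p 0 = sa[p] := by
    intro p hp
    rw [List.getD_eq_getElem?_getD, List.getElem?_eq_getElem hp, Option.getD_some]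
  have hr1lt : r - 1 < sa.length := by omega
  have hs1lt : s - 1 < sa.length := by omega
  obtain ⟨j, hj⟩ : ∃ j, j = sa[r - 1]'hr1lt := ⟨_, rfl⟩
  obtain ⟨k, hk⟩ : ∃ k, k = sa[s - 1]'hs1lt := ⟨_, rfl⟩
  have hjmem : 1 ≤ j ∧ j ≤ T.length := (hmem j).mp (hj ▸ List.getElem_mem _)
  have hSj : SufLt T j (i - 1) := by
    have := hsorted (r - 1) r hr1lt hrlt (by omega)
    rwa [hsa_r, ← hj] at this
  have hSk : SufLt T k i := by
    have := hsorted (s - 1) s hs1lt hslt (by omega)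
    rwa [hsa_s, ← hk] at this
  have hLHS : LCPat T sa r = lcp (Suf T (i - 1)) (Suf T j) := by
    rw [LCPat, if_neg hrn0, hgetD r hrlt, hsa_r, hgetD (r - 1) hr1lt, ← hj]
  have hRHS : LCPat T sa s = lcp (Suf T i) (Suf T k) := by
    rw [LCPat, if_neg hsn0, hgetD s hslt, hsa_s, hgetD (s - 1) hs1lt, ← hk]
  rw [hLHS, hRHS]
  have hi1cons : Suf T (i - 1) = T[i - 1 - 1]'(by omega) :: Suf T (i - 1 + 1) :=
    suf_cons T (by omega) (by omega)
  have hjcons : Suf T j = T[j - 1]'(by omega) :: Suf T (j + 1) :=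
    suf_cons T hjmem.1 hjmem.2
  have hii : i - 1 + 1 = i := by omega
  rw [hii] at hi1cons
  by_cases hcd : T[i - 1 - 1]'(by omega) = T[j - 1]'(by omega)
  swap
  · rw [hi1cons, hjcons]
    simp only [lcp, if_neg hcd]
    exact Nat.zero_le _
  have hjne : j ≠ i - 1 := by
    intro h
    have : r - 1 = r := by
      apply (List.Nodup.getElem_inj_iff hnodup).mp
      rw [hsa_r, ← hj, h]
    omega
  have hjN : j < T.length := by
    rcases lt_or_eq_of_le hjmem.2 with h | h
    · exact h
    · exfalso
      have hch1 : Chr T (i - 1) = T[i - 1 - 1]'(by omega) := by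
        rw [Chr, hi1cons]; rfl
      have hch2 : Chr T j = T[j - 1]'(by omega) := by
        rw [Chr, hjcons]; rfl
      have := hlast (i - 1) (by omega) (by omega)
      rw [← h, hch1, hch2, hcd] at this
      exact lt_irrefl _ this
  have hlex1 : List.Lex (· < ·) (Suf T (j + 1)) (Suf T i) := by
    have := hSj
    rw [SufLt, hjcons, hi1cons, ← hcd] at this
    rcases lex_cons_cases this with h | ⟨-, h⟩
    · exact absurd h (lt_irrefl _)
    · exact h
  have hj1mem : (j + 1) ∈ sa := (hmem _).mpr ⟨by omega, by omega⟩
  obtain ⟨q, hq⟩ : ∃ n, List.idxOf (j + 1) sa = n := ⟨_, rfl⟩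
  have hqlt : q < sa.length := hq ▸ List.idxOf_lt_length_iff.mpr hj1mem
  have hsa_q : sa[q]'hqlt = j + 1 := by
    have := List.getElem_idxOf (List.idxOf_lt_length_iff.mpr hj1mem)
    simpa only [hq] using this
  have hqs : q ≠ s := by
    intro h
    have : j + 1 = i := by rw [← hsa_q, ← hsa_s]; simp only [h]
    omega
  have hqlts : q < s := by
    rcases lt_or_gt_of_ne hqs with h | h
    · exact h
    · exfalso
      have := hsorted s q hslt hqlt h
      rw [hsa_s, hsa_q] at this
      exact (Std.Asymm.asymm _ _ hlex1) this
  have hkey : lcp (Suf T (j + 1)) (Suf T i) ≤ lcp (Suf T k) (Suf T i) := by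
    rcases eq_or_lt_of_le (by omega : q ≤ s - 1) with h | h
    · rw [hk]; simp only [← h]; rw [hsa_q]
    · have hlex2 : List.Lex (· < ·) (Suf T (j + 1)) (Suf T k) := by
        have := hsorted q (s - 1) hqlt hs1lt h
        rwa [hsa_q, ← hk] at this
      exact lcp_le_of_lex _ _ _ hlex2 hSk
  calc lcp (Suf T (i - 1)) (Suf T j)
      = lcp (Suf T i) (Suf T (j + 1)) + 1 := by
        rw [hi1cons, hjcons]; simp only [lcp, if_pos hcd]
    _ ≤ lcp (Suf T i) (Suf T k) + 1 := by
        rw [lcp_comm (Suf T i) (Suf T (j + 1)), lcp_comm (Suf T i) (Suf T k)]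
        exact Nat.add_le_add_right hkey 1
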